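/- Let L ≥ 1 and 0 < τ ≤ 1 ≤ T, and for t > 0 set L_t = min{L·e^{2t}, 1/(1−e^{-2t})}. Then there is a universal constant C such that ∫_τ^T L_t² dt ≤ C·(T + 1/(τ + 1/L)). -/

import Mathlib

open Real

set_option maxHeartbeats 1600000 in
/-- `∫_τ^T L_t² dt ≲ T + 1/(τ + 1/L)` where `L_t = min{L e^{2t}, 1/(1-e^{-2t})}`. -/
theorem integral_Lt_sq_le : ∃ C : ℝ, 0 < C ∧ ∀ (L τ T : ℝ), 1 ≤ L → 0 < τ → τ ≤ 1 → 1 ≤ T →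
    (∫ t in τ..T, (min (L * Real.exp (2 * t)) (1 / (1 - Real.exp (-2 * t)))) ^ 2) ≤
      C * (T + 1 / (τ + 1 / L)) := by
  refine ⟨1000, by norm_num, ?_⟩
  intro L τ T hL hτ hτ1 hT
  have hL0 : (0:ℝ) < L := lt_of_lt_of_le one_pos hL
  set a : ℝ := 1 / L with ha
  have ha0 : 0 < a := by positivity
  have hτT : τ ≤ T := hτ1.trans hT
  set c : ℝ := 16 * Real.exp 2 ^ 2 with hc
  have hc0 : 0 < c := by positivity
  have he : Real.exp 1 < 2.7182818286 := Real.exp_one_lt_d9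
  have he2 : Real.exp 2 ≤ 7.39 := by
    have : Real.exp 2 = Real.exp 1 * Real.exp 1 := by
      rw [← Real.exp_add]; norm_num
    nlinarith [Real.exp_pos 1]
  have hc1000 : c ≤ 1000 := by
    rw [hc]; nlinarith [Real.exp_pos 2]
  -- positivity of denominator on the interval
  have hden : ∀ t : ℝ, 0 < t → 0 < 1 - Real.exp (-2 * t) := by
    intro t ht
    have : Real.exp (-2 * t) < 1 := by
      rw [Real.exp_lt_one_iff]; linarith
    linarith
  -- pointwise bound
  have key : ∀ t ∈ Set.Icc τ T,
      (min (L * Real.exp (2 * t)) (1 / (1 - Real.exp (-2 * t)))) ^ 2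
        ≤ 4 + c * ((t + a)⁻¹) ^ 2 := by
    intro t ht
    have ht0 : 0 < t := lt_of_lt_of_le hτ ht.1
    have hd : 0 < 1 - Real.exp (-2 * t) := hden t ht0
    have hfnn : 0 ≤ min (L * Real.exp (2 * t)) (1 / (1 - Real.exp (-2 * t))) := by
      apply le_min
      · positivity
      · positivity
    have hta : 0 < t + a := by linarith
    rcases le_or_gt t 1 with ht1 | ht1
    · -- small t : f t ≤ 4 e² / (t+a)
      have hbound : min (L * Real.exp (2 * t)) (1 / (1 - Real.exp (-2 * t)))
          ≤ 4 * Real.exp 2 / (t + a) := by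
        rcases le_or_gt t a with hta' | hta'
        · -- use L e^{2t} ≤ L e² ≤ 4e²/(t+a) since t+a ≤ 2a = 2/L
          refine le_trans (min_le_left _ _) ?_
          have h1 : Real.exp (2 * t) ≤ Real.exp 2 := by
            apply Real.exp_le_exp.mpr; linarith
          have h2 : L * Real.exp (2 * t) ≤ L * Real.exp 2 := by
            exact mul_le_mul_of_nonneg_left h1 hL0.le
          refine h2.trans ?_
          rw [le_div_iff₀ hta]
          have haL : a * L = 1 := by
            rw [ha]; field_simp
          have hLt : L * (t + a) ≤ 2 := by
            nlinarith [mul_le_mul_of_nonneg_left hta' hL0.le]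
          nlinarith [Real.exp_pos 2, hLt]
        · -- use 1/(1-e^{-2t}) ≤ 2/t ≤ 4e²/(t+a) since t+a ≤ 2t
          refine le_trans (min_le_right _ _) ?_
          have hE : (1:ℝ) + 2 * t ≤ Real.exp (2 * t) := by
            have := Real.add_one_le_exp (2 * t); linarith
          have hEinv : Real.exp (-2 * t) * Real.exp (2 * t) = 1 := by
            rw [← Real.exp_add]; ring_nf; exact Real.exp_zero
          have hhalf : t / 2 ≤ 1 - Real.exp (-2 * t) := by
            nlinarith [Real.exp_pos (-2 * t), Real.exp_pos (2 * t)]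
          have h1 : 1 / (1 - Real.exp (-2 * t)) ≤ 1 / (t / 2) :=
            one_div_le_one_div_of_le (by linarith) hhalf
          refine h1.trans ?_
          rw [div_le_div_iff₀ (by linarith) hta]
          nlinarith [Real.exp_pos 2, Real.one_le_exp (by norm_num : (0:ℝ) ≤ 2)]
      have hsq : (min (L * Real.exp (2 * t)) (1 / (1 - Real.exp (-2 * t)))) ^ 2
          ≤ (4 * Real.exp 2 / (t + a)) ^ 2 := by
        exact pow_le_pow_left₀ hfnn hbound 2
      refine hsq.trans ?_
      have : (4 * Real.exp 2 / (t + a)) ^ 2 = c * ((t + a)⁻¹) ^ 2 := by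
        rw [hc]; field_simp; ring
      rw [this]
      nlinarith []
    · -- large t : f t ≤ 2
      have hE2 : Real.exp (-2 * t) ≤ 1 / 2 := by
        have h3 : (3:ℝ) ≤ Real.exp 2 := by
          have := Real.add_one_le_exp (2:ℝ); linarith
        have hmono : Real.exp (-2 * t) ≤ Real.exp (-2) := by
          apply Real.exp_le_exp.mpr; linarith
        have : Real.exp (-2) = (Real.exp 2)⁻¹ := by
          rw [← Real.exp_neg]
        rw [this] at hmono
        refine hmono.trans ?_
        rw [inv_le_comm₀ (by positivity) (by norm_num)]
        linarith
      have hbound : min (L * Real.exp (2 * t)) (1 / (1 - Real.exp (-2 * t))) ≤ 2 := by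
        refine le_trans (min_le_right _ _) ?_
        rw [div_le_iff₀ hd]
        linarith
      have hsq : (min (L * Real.exp (2 * t)) (1 / (1 - Real.exp (-2 * t)))) ^ 2 ≤ 4 := by
        nlinarith
      have : 0 ≤ c * ((t + a)⁻¹) ^ 2 := by positivity
      linarith
  -- integrability of the integrand
  have huIcc : Set.uIcc τ T = Set.Icc τ T := Set.uIcc_of_le hτT
  have hposmem : ∀ t ∈ Set.uIcc τ T, 0 < t := by
    intro t ht
    rw [huIcc] at ht
    exact lt_of_lt_of_le hτ ht.1
  have hcont1 : ContinuousOn (fun t => L * Real.exp (2 * t)) (Set.uIcc τ T) :=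
    (continuous_const.mul (Real.continuous_exp.comp (continuous_const.mul continuous_id))).continuousOn
  have hcont2 : ContinuousOn (fun t => 1 / (1 - Real.exp (-2 * t))) (Set.uIcc τ T) := by
    apply ContinuousOn.div continuousOn_const
    · exact (continuous_const.sub (Real.continuous_exp.comp (continuous_const.mul continuous_id))).continuousOn
    · intro t ht
      exact ne_of_gt (hden t (hposmem t ht))
  have hf : IntervalIntegrable
      (fun t => (min (L * Real.exp (2 * t)) (1 / (1 - Real.exp (-2 * t)))) ^ 2)
      MeasureTheory.volume τ T :=
    ((hcont1.inf hcont2).pow 2).intervalIntegrable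
  have hg : IntervalIntegrable (fun t => 4 + c * ((t + a)⁻¹) ^ 2)
      MeasureTheory.volume τ T := by
    apply ContinuousOn.intervalIntegrable
    apply ContinuousOn.add continuousOn_const
    apply ContinuousOn.mul continuousOn_const
    apply ContinuousOn.pow
    apply ContinuousOn.inv₀ (continuousOn_id.add continuousOn_const)
    intro t ht
    have := hposmem t ht
    intro h
    simp only [Pi.add_apply, id] at h
    nlinarith
  have hmono := intervalIntegral.integral_mono_on hτT hf hg key
  refine hmono.trans ?_
  -- compute the integral of the bound
  have hzpow : ∀ x : ℝ, 0 < x → ((x)⁻¹ : ℝ) ^ 2 = x ^ (-2 : ℤ) := by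
    intro x hx
    rw [zpow_neg, inv_pow]
    norm_cast
  have hint2 : (∫ t in τ..T, ((t + a)⁻¹) ^ 2) = (τ + a)⁻¹ - (T + a)⁻¹ := by
    have hrw : (∫ t in τ..T, ((t + a)⁻¹) ^ 2)
        = ∫ t in τ..T, (fun u => (u : ℝ) ^ (-2 : ℤ)) (t + a) := by
      apply intervalIntegral.integral_congr
      intro t ht
      have ht0 : 0 < t := hposmem t ht
      simp only
      rw [hzpow (t + a) (by linarith)]
    rw [hrw, intervalIntegral.integral_comp_add_right (fun u => (u:ℝ) ^ (-2:ℤ)) a]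
    rw [integral_zpow]
    · norm_num
      ring
    · right
      constructor
      · norm_num
      · apply Set.notMem_uIcc_of_lt <;> linarith
  have hg2 : IntervalIntegrable (fun t => c * ((t + a)⁻¹) ^ 2)
      MeasureTheory.volume τ T := by
    apply ContinuousOn.intervalIntegrable
    apply ContinuousOn.mul continuousOn_const
    apply ContinuousOn.pow
    apply ContinuousOn.inv₀ (continuousOn_id.add continuousOn_const)
    intro t ht
    have := hposmem t ht
    intro h
    simp only [Pi.add_apply, id] at h
    nlinarith
  have hsplit := intervalIntegral.integral_add
    (intervalIntegrable_const (c := (4:ℝ)) (μ := MeasureTheory.volume) (a := τ) (b := T)) hg2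
  rw [hsplit, intervalIntegral.integral_const_mul, intervalIntegral.integral_const, hint2]
  have h1 : 0 < τ + a := by linarith
  have h2 : 0 < T + a := by linarith
  have h3 : (0:ℝ) ≤ (T + a)⁻¹ := by positivity
  have h4 : (0:ℝ) < (τ + a)⁻¹ := by positivity
  have hrw : 1 / (τ + 1 / L) = (τ + a)⁻¹ := by rw [ha, one_div]
  rw [hrw]
  have h6 : c * ((τ + a)⁻¹ - (T + a)⁻¹) ≤ 1000 * (τ + a)⁻¹ := by nlinarith
  have h5 : (T - τ) • (4:ℝ) ≤ 4 * T := by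
    rw [smul_eq_mul]; nlinarith
  nlinarith
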